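/- Let n ≥ 1, let T be an n×n real row-stochastic matrix, and let p ∈ (0,1). Then the matrix T_r := p·T·(I − (1−p)·T)⁻¹ is itself row-stochastic: all of its entries are nonnegative and each of its rows sums to 1. -/

import Mathlib

open Matrix

section aux
variable {n : ℕ}

-- row sum of product
lemma rowsum_mul (A B : Matrix (Fin n) (Fin n) ℝ) (i : Fin n) :
    ∑ j, (A * B) i j = ∑ k, A i k * (∑ j, B k j) := by
  simp_rw [Matrix.mul_apply, Finset.mul_sum]
  rw [Finset.sum_comm]

lemma pow_nonneg_entries (M : Matrix (Fin n) (Fin n) ℝ) (hM : ∀ i j, 0 ≤ M i j) :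
    ∀ k : ℕ, ∀ i j, 0 ≤ (M ^ k) i j := by
  intro k
  induction k with
  | zero => intro i j; simp [Matrix.one_apply]; positivity
  | succ m ih =>
      intro i j
      rw [pow_succ, Matrix.mul_apply]
      exact Finset.sum_nonneg fun l _ => mul_nonneg (ih i l) (hM l j)

lemma pow_rowsum (M : Matrix (Fin n) (Fin n) ℝ) (q : ℝ) (hM : ∀ i, ∑ j, M i j = q) :
    ∀ k : ℕ, ∀ i, ∑ j, (M ^ k) i j = q ^ k := by
  intro k
  induction k with
  | zero => intro i; simp [Matrix.one_apply]
  | succ m ih =>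
      intro i
      rw [pow_succ, rowsum_mul]
      simp_rw [hM, ← Finset.sum_mul, ih, pow_succ]

end aux

/-- For an `n × n` real row-stochastic matrix `T` and `p ∈ (0,1)`,
the matrix `T_r := p • T * (I - (1-p) • T)⁻¹` is itself row-stochastic: all entries
are nonnegative and each row sums to `1`. -/
theorem stmt2 (n : ℕ) (hn : 1 ≤ n) (T : Matrix (Fin n) (Fin n) ℝ)
    (hTnonneg : ∀ i j, 0 ≤ T i j) (hTrow : ∀ i, ∑ j, T i j = 1)
    (p : ℝ) (hp0 : 0 < p) (hp1 : p < 1) :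
    (∀ i j, 0 ≤ (p • (T * (1 - (1 - p) • T)⁻¹)) i j) ∧
    (∀ i, ∑ j, (p • (T * (1 - (1 - p) • T)⁻¹)) i j = 1) := by
  letI : SeminormedAddCommGroup (Matrix (Fin n) (Fin n) ℝ) :=
    Matrix.linftyOpSeminormedAddCommGroup
  letI : NormedRing (Matrix (Fin n) (Fin n) ℝ) := Matrix.linftyOpNormedRing
  haveI : CompleteSpace (Matrix (Fin n) (Fin n) ℝ) :=
    by infer_instance
  set q : ℝ := 1 - p with hq
  have hq0 : 0 ≤ q := by simp [hq]; linarith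
  have hq1 : q < 1 := by simp [hq]; linarith
  set M : Matrix (Fin n) (Fin n) ℝ := q • T with hMdef
  have hMentry : ∀ i j, M i j = q * T i j := fun i j => rfl
  have hMnonneg : ∀ i j, 0 ≤ M i j := fun i j =>
    mul_nonneg hq0 (hTnonneg i j)
  have hMrow : ∀ i, ∑ j, M i j = q := by
    intro i; simp_rw [hMentry, ← Finset.mul_sum, hTrow, mul_one]
  -- norm bound
  have hMnorm : ‖M‖ < 1 := by
    have h1 : ‖M‖₊ < 1 := by
      rw [Matrix.linfty_opNNNorm_def]
      refine Finset.sup_lt_iff (by norm_num) |>.mpr fun i _ => ?_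
      have : ((∑ j, ‖M i j‖₊ : NNReal) : ℝ) < 1 := by
        push_cast
        calc ∑ j, ‖M i j‖ = ∑ j, M i j := by
              refine Finset.sum_congr rfl fun j _ => ?_
              rw [Real.norm_eq_abs, abs_of_nonneg (hMnonneg i j)]
          _ = q := hMrow i
          _ < 1 := hq1
      exact_mod_cast this
    exact_mod_cast h1
  -- the geometric series for the inverse
  have hSsum0 : HasSum (fun k : ℕ => M ^ k) (Ring.inverse (1 - M)) :=
    @hasSum_geom_series_inverse _ _ (@instHasSummableGeomSeriesOfCompleteSpace _ _ ‹_›) M hMnorm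
  set S : Matrix (Fin n) (Fin n) ℝ := (1 - M)⁻¹ with hSdef
  have hSsum : HasSum (fun k : ℕ => M ^ k) S := by
    rw [hSdef, Matrix.nonsing_inv_eq_ringInverse]; exact hSsum0
  -- entrywise sums
  have hentry : ∀ i j, HasSum (fun k : ℕ => (M ^ k) i j) (S i j) := by
    intro i j
    have hb : ∀ A : Matrix (Fin n) (Fin n) ℝ, ‖A i j‖ ≤ 1 * ‖A‖ := by
      intro A
      have h1 : ‖A i j‖₊ ≤ ‖A‖₊ := by
        rw [Matrix.linfty_opNNNorm_def]
        exact le_trans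
          (Finset.single_le_sum (f := fun j => ‖A i j‖₊) (fun _ _ => zero_le')
            (Finset.mem_univ j))
          (Finset.le_sup (f := fun i => ∑ j, ‖A i j‖₊) (Finset.mem_univ i))
      rw [one_mul]
      exact_mod_cast h1
    have hcont : Continuous fun A : Matrix (Fin n) (Fin n) ℝ => A i j :=
      ((Matrix.entryLinearMap ℝ ℝ i j).mkContinuous 1 hb).continuous
    exact hSsum.map ((Matrix.entryLinearMap ℝ ℝ i j).toAddMonoidHom) hcont
  have hSnonneg : ∀ i j, 0 ≤ S i j := by
    intro i j
    rw [← (hentry i j).tsum_eq]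
    exact tsum_nonneg fun k => pow_nonneg_entries M hMnonneg k i j
  have hSrow : ∀ i, ∑ j, S i j = p⁻¹ := by
    intro i
    have h1 : HasSum (fun k : ℕ => ∑ j, (M ^ k) i j) (∑ j, S i j) :=
      hasSum_sum fun j _ => hentry i j
    simp_rw [pow_rowsum M q hMrow] at h1
    have h2 : HasSum (fun k : ℕ => q ^ k) (1 - q)⁻¹ :=
      hasSum_geometric_of_lt_one hq0 hq1
    rw [h1.unique h2, hq]
    ring_nf
  constructor
  · intro i j
    rw [Matrix.smul_apply, Matrix.mul_apply, smul_eq_mul]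
    exact mul_nonneg hp0.le
      (Finset.sum_nonneg fun k _ => mul_nonneg (hTnonneg i k) (hSnonneg k j))
  · intro i
    simp_rw [Matrix.smul_apply, smul_eq_mul, ← Finset.mul_sum]
    rw [rowsum_mul]
    calc p * ∑ k, T i k * ∑ j, S k j
        = p * ∑ k, T i k * p⁻¹ := by
          congr 1
          exact Finset.sum_congr rfl fun k _ => by rw [hSrow]
      _ = 1 := by
          rw [← Finset.sum_mul, hTrow, one_mul, mul_inv_cancel₀ hp0.ne']
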